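/- Let M be a map with flag set F and generators s0, s1, s2, and let r0, r1, r2 be the truncation generators on F × {0,1,2}. Then every orbit of the subgroup ⟨r1, r2⟩ acting on F × {0,1,2} has exactly 6 elements; that is, every vertex of the truncated map Tr(M) has valency 3. -/
import Mathlib


/-- every orbit of ⟨r1, r2⟩ on F × {0,1,2} has exactly 6 elements,
i.e. every vertex of Tr(M) has valency 3. -/
theorem truncation_vertex_orbits_card_six
    {F : Type*} [Fintype F] [Nonempty F]
    (s0 s1 s2 : Equiv.Perm F)
    (hs0i : s0 * s0 = 1) (hs0f : ∀ x, s0 x ≠ x)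
    (hs1i : s1 * s1 = 1) (hs1f : ∀ x, s1 x ≠ x)
    (hs2i : s2 * s2 = 1) (hs2f : ∀ x, s2 x ≠ x)
    (hcomm : s0 * s2 = s2 * s0)
    (hs02i : (s0 * s2) * (s0 * s2) = 1) (hs02f : ∀ x, (s0 * s2) x ≠ x)
    (htrans : ∀ x y : F, ∃ g ∈ Subgroup.closure ({s0, s1, s2} : Set (Equiv.Perm F)), g x = y)
    (r0 r1 r2 : Equiv.Perm (F × Fin 3))
    (hr0 : ∀ Φ : F, r0 (Φ, 0) = (s1 Φ, 0) ∧ r0 (Φ, 1) = (s0 Φ, 1) ∧ r0 (Φ, 2) = (s1 Φ, 2))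
    (hr1 : ∀ Φ : F, r1 (Φ, 0) = (s2 Φ, 0) ∧ r1 (Φ, 1) = (Φ, 2) ∧ r1 (Φ, 2) = (Φ, 1))
    (hr2 : ∀ Φ : F, r2 (Φ, 0) = (Φ, 2) ∧ r2 (Φ, 1) = (s2 Φ, 1) ∧ r2 (Φ, 2) = (Φ, 0)) :
    ∀ x : F × Fin 3,
      Nat.card (MulAction.orbit (↥(Subgroup.closure ({r1, r2} : Set (Equiv.Perm (F × Fin 3))))) x) = 6 := by
  classical
  have fin3 : ∀ i : Fin 3, i = 0 ∨ i = 1 ∨ i = 2 := by decide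
  set H := Subgroup.closure ({r1, r2} : Set (Equiv.Perm (F × Fin 3))) with hH
  have hs2s2 : ∀ a : F, s2 (s2 a) = a := by
    intro a
    have := congrArg (fun g : Equiv.Perm F => g a) hs2i
    simpa using this
  have hr1mem : r1 ∈ H := Subgroup.subset_closure (by simp)
  have hr2mem : r2 ∈ H := Subgroup.subset_closure (by simp)
  have step : ∀ (x : F × Fin 3) (g : Equiv.Perm (F × Fin 3)), g ∈ H →
      ∀ y, y ∈ MulAction.orbit H x → g y ∈ MulAction.orbit H x := by
    rintro x g hg y ⟨h, rfl⟩
    exact ⟨⟨g, hg⟩ * h, by simp [mul_smul]⟩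
  have key : ∀ Φ : F,
      MulAction.orbit H ((Φ, 0) : F × Fin 3)
        = ({Φ, s2 Φ} : Set F) ×ˢ (Set.univ : Set (Fin 3)) := by
    intro Φ
    set S : Set (F × Fin 3) := ({Φ, s2 Φ} : Set F) ×ˢ (Set.univ : Set (Fin 3)) with hS
    have hmemS : ∀ p : F × Fin 3, p ∈ S ↔ (p.1 = Φ ∨ p.1 = s2 Φ) := by
      intro p; simp [hS, Set.mem_prod]
    have hr1S : ∀ p ∈ S, r1 p ∈ S := by
      rintro ⟨a, i⟩ hp
      rw [hmemS] at hp ⊢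
      replace hp : a = Φ ∨ a = s2 Φ := hp
      rcases fin3 i with rfl | rfl | rfl
      · rw [(hr1 a).1]
        rcases hp with rfl | rfl <;> simp [hs2s2]
      · rw [(hr1 a).2.1]; exact hp
      · rw [(hr1 a).2.2]; exact hp
    have hr2S : ∀ p ∈ S, r2 p ∈ S := by
      rintro ⟨a, i⟩ hp
      rw [hmemS] at hp ⊢
      replace hp : a = Φ ∨ a = s2 Φ := hp
      rcases fin3 i with rfl | rfl | rfl
      · rw [(hr2 a).1]; exact hp
      · rw [(hr2 a).2.1]
        rcases hp with rfl | rfl <;> simp [hs2s2]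
      · rw [(hr2 a).2.2]; exact hp
    have hr1inv : r1⁻¹ = r1 := by
      have : r1 * r1 = 1 := by
        apply Equiv.ext
        rintro ⟨a, i⟩
        rcases fin3 i with rfl | rfl | rfl <;>
          simp only [Equiv.Perm.mul_apply, (hr1 a).1, (hr1 a).2.1, (hr1 a).2.2,
            (hr1 (s2 a)).1, hs2s2, Equiv.Perm.one_apply]
      exact inv_eq_of_mul_eq_one_right this
    have hr2inv : r2⁻¹ = r2 := by
      have : r2 * r2 = 1 := by
        apply Equiv.ext
        rintro ⟨a, i⟩
        rcases fin3 i with rfl | rfl | rfl <;>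
          simp only [Equiv.Perm.mul_apply, (hr2 a).1, (hr2 a).2.1, (hr2 a).2.2,
            (hr2 (s2 a)).2.1, hs2s2, Equiv.Perm.one_apply]
      exact inv_eq_of_mul_eq_one_right this
    have hΦS : ((Φ, 0) : F × Fin 3) ∈ S := by rw [hmemS]; left; rfl
    apply Set.eq_of_subset_of_subset
    · rintro p ⟨⟨g, hg⟩, rfl⟩
      have main : ∀ g ∈ H, (∀ p ∈ S, g p ∈ S) ∧ (∀ p ∈ S, g⁻¹ p ∈ S) := by
        intro g hg
        induction hg using Subgroup.closure_induction with
        | mem g hg =>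
          rcases hg with rfl | rfl
          · exact ⟨hr1S, by rw [hr1inv]; exact hr1S⟩
          · exact ⟨hr2S, by rw [hr2inv]; exact hr2S⟩
        | one => simp
        | mul g h hg hh ihg ihh =>
          refine ⟨fun p hp => ?_, fun p hp => ?_⟩
          · rw [Equiv.Perm.mul_apply]; exact ihg.1 _ (ihh.1 _ hp)
          · rw [mul_inv_rev, Equiv.Perm.mul_apply]
            exact ihh.2 _ (ihg.2 _ hp)
        | inv g hg ihg => exact ⟨ihg.2, by simpa using ihg.1⟩
      exact (main g hg).1 _ hΦS
    · set O := MulAction.orbit H ((Φ, 0) : F × Fin 3) with hO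
      have m0 : ((Φ, 0) : F × Fin 3) ∈ O := MulAction.mem_orbit_self _
      have m2 : ((Φ, 2) : F × Fin 3) ∈ O := by
        have := step _ r2 hr2mem _ m0; rwa [(hr2 Φ).1] at this
      have m1 : ((Φ, 1) : F × Fin 3) ∈ O := by
        have := step _ r1 hr1mem _ m2; rwa [(hr1 Φ).2.2] at this
      have n1 : ((s2 Φ, 1) : F × Fin 3) ∈ O := by
        have := step _ r2 hr2mem _ m1; rwa [(hr2 Φ).2.1] at this
      have n2 : ((s2 Φ, 2) : F × Fin 3) ∈ O := by
        have := step _ r1 hr1mem _ n1; rwa [(hr1 (s2 Φ)).2.1] at this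
      have n0 : ((s2 Φ, 0) : F × Fin 3) ∈ O := by
        have := step _ r2 hr2mem _ n2; rwa [(hr2 (s2 Φ)).2.2] at this
      rintro ⟨a, i⟩ hp
      rw [hmemS] at hp
      replace hp : a = Φ ∨ a = s2 Φ := hp
      rcases fin3 i with rfl | rfl | rfl <;> rcases hp with rfl | rfl <;> assumption
  intro x
  obtain ⟨Φ, i⟩ := x
  have hmem : ((Φ, i) : F × Fin 3) ∈ MulAction.orbit H ((Φ, 0) : F × Fin 3) := by
    rw [key Φ]; simp
  have horb : MulAction.orbit H ((Φ, i) : F × Fin 3)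
      = MulAction.orbit H ((Φ, 0) : F × Fin 3) :=
    MulAction.orbit_eq_iff.mpr hmem
  rw [horb, key Φ]
  have hne : Φ ≠ s2 Φ := fun h => hs2f Φ h.symm
  rw [Nat.card_congr (Equiv.Set.prod _ _), Nat.card_prod]
  rw [Nat.card_coe_set_eq, Nat.card_coe_set_eq,
    Set.ncard_pair hne, Set.ncard_univ]
  simp [Nat.card_eq_fintype_card]
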